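/- arXiv:2209.02344 — 2 statements merged into one kernel-verified Lean document; each statement's English description precedes it below -/
import Mathlib

section
/- Let a > 0, γ > 2 and 0 < ρ̲ ≤ ρ̄ be real numbers. Then there exists a constant C > 0, depending only on a, γ, ρ̲, ρ̄, such that for every ρ with 0 ≤ ρ ≤ ρ̄ and every r with ρ̲ ≤ r ≤ ρ̄ one has |ρ − r|^γ ≤ C · E_P(ρ|r), where E_P(ρ|r) = P(ρ) − P'(r)(ρ − r) − P(r) and P(ρ) = a ρ^γ/(γ−1). -/
/-- Pressure potential `P(ρ) = a ρ^γ / (γ - 1)` (real power). -/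
noncomputable def Ppot (a γ ρ : ℝ) : ℝ := a * ρ ^ γ / (γ - 1)

/-- Derivative of the pressure potential, `P'(r) = a γ r^(γ-1) / (γ - 1)`. -/
noncomputable def dPpot (a γ r : ℝ) : ℝ := a * γ * r ^ (γ - 1) / (γ - 1)

/-- Relative pressure potential `E_P(ρ|r) = P(ρ) - P'(r)(ρ - r) - P(r)`. -/
noncomputable def EP (a γ ρ r : ℝ) : ℝ :=
  Ppot a γ ρ - dPpot a γ r * (ρ - r) - Ppot a γ r

/-- Superadditivity of `x ↦ x^p` on nonnegative reals for `p ≥ 1`. -/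
lemma rpow_superadd {p s t : ℝ} (hp : 1 ≤ p) (hs : 0 ≤ s) (ht : 0 ≤ t) :
    s ^ p + t ^ p ≤ (s + t) ^ p := by
  have := NNReal.add_rpow_le_rpow_add (⟨s, hs⟩ : NNReal) (⟨t, ht⟩ : NNReal) hp
  exact_mod_cast this

/-- The key pointwise inequality, valid for all `γ ≥ 2`, `r > 0`, `ρ ≥ 0`. -/
lemma key_pointwise {γ r ρ : ℝ} (hγ : 2 ≤ γ) (hr : 0 < r) (hρ : 0 ≤ ρ) :
    |ρ - r| ^ γ ≤ ρ ^ γ - γ * r ^ (γ - 1) * (ρ - r) - r ^ γ := by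
  have hγ1 : (1 : ℝ) ≤ γ := by linarith
  have hγ1' : (1 : ℝ) ≤ γ - 1 := by linarith
  have hγ0 : (0 : ℝ) ≤ γ := by linarith
  rcases le_total r ρ with hcase | hcase
  · -- ρ ≥ r
    rw [abs_of_nonneg (by linarith)]
    set f : ℝ → ℝ := fun x => x ^ γ - (x - r) ^ γ - γ * r ^ (γ - 1) * (x - r) - r ^ γ with hf
    have hd : ∀ x : ℝ, HasDerivAt f
        (γ * x ^ (γ - 1) - γ * (x - r) ^ (γ - 1) * 1 - γ * r ^ (γ - 1) * 1) x := by
      intro x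
      have h1 : HasDerivAt (fun x : ℝ => x ^ γ) (γ * x ^ (γ - 1)) x :=
        Real.hasDerivAt_rpow_const (Or.inr hγ1)
      have h2 : HasDerivAt (fun x : ℝ => (x - r) ^ γ) (γ * (x - r) ^ (γ - 1) * 1) x := by
        exact (Real.hasDerivAt_rpow_const (p := γ) (x := x - r) (Or.inr hγ1)).comp x
          ((hasDerivAt_id x).sub_const r)
      have h3 : HasDerivAt (fun x : ℝ => γ * r ^ (γ - 1) * (x - r)) (γ * r ^ (γ - 1) * 1) x :=
        ((hasDerivAt_id x).sub_const r).const_mul _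
      exact ((h1.sub h2).sub h3).sub_const _
    have hdiff : Differentiable ℝ f := fun x => (hd x).differentiableAt
    have hmono : MonotoneOn f (Set.Ici r) := by
      apply monotoneOn_of_deriv_nonneg (convex_Ici r) hdiff.continuous.continuousOn
        (hdiff.differentiableOn)
      intro x hx
      rw [interior_Ici] at hx
      rw [(hd x).deriv]
      have hsum : (x - r) ^ (γ - 1) + r ^ (γ - 1) ≤ x ^ (γ - 1) := by
        have := rpow_superadd hγ1' (s := x - r) (t := r) (by linarith [(Set.mem_Ioi.mp hx).le] : (0:ℝ) ≤ x - r)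
          hr.le
        simpa using this
      nlinarith [Real.rpow_nonneg (by linarith [(Set.mem_Ioi.mp hx).le] : (0:ℝ) ≤ x - r) (γ - 1)]
    have hfr : f r = 0 := by
      simp [hf, Real.zero_rpow (by linarith : γ ≠ 0)]
    have := hmono (Set.mem_Ici.2 le_rfl) (Set.mem_Ici.2 hcase) hcase
    rw [hfr] at this
    simp only [hf] at this
    linarith
  · -- ρ ≤ r
    rw [abs_of_nonpos (by linarith), neg_sub]
    set f : ℝ → ℝ := fun x => x ^ γ - (r - x) ^ γ - γ * r ^ (γ - 1) * (x - r) - r ^ γ with hf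
    have hd : ∀ x : ℝ, HasDerivAt f
        (γ * x ^ (γ - 1) - γ * (r - x) ^ (γ - 1) * (-1) - γ * r ^ (γ - 1) * 1) x := by
      intro x
      have h1 : HasDerivAt (fun x : ℝ => x ^ γ) (γ * x ^ (γ - 1)) x :=
        Real.hasDerivAt_rpow_const (Or.inr hγ1)
      have h2 : HasDerivAt (fun x : ℝ => (r - x) ^ γ) (γ * (r - x) ^ (γ - 1) * (-1)) x := by
        have hin : HasDerivAt (fun x : ℝ => r - x) (-1) x := by
          simpa using (hasDerivAt_id x).const_sub r
        exact (Real.hasDerivAt_rpow_const (p := γ) (x := r - x) (Or.inr hγ1)).comp x hin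
      have h3 : HasDerivAt (fun x : ℝ => γ * r ^ (γ - 1) * (x - r)) (γ * r ^ (γ - 1) * 1) x :=
        ((hasDerivAt_id x).sub_const r).const_mul _
      exact ((h1.sub h2).sub h3).sub_const _
    have hdiff : Differentiable ℝ f := fun x => (hd x).differentiableAt
    have hanti : AntitoneOn f (Set.Icc 0 r) := by
      apply antitoneOn_of_deriv_nonpos (convex_Icc 0 r) hdiff.continuous.continuousOn
        (hdiff.differentiableOn)
      intro x hx
      rw [interior_Icc] at hx
      obtain ⟨hx0, hxr⟩ := hx
      rw [(hd x).deriv]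
      have hsum : x ^ (γ - 1) + (r - x) ^ (γ - 1) ≤ r ^ (γ - 1) := by
        have := rpow_superadd hγ1' (s := x) (t := r - x) hx0.le (by linarith : (0:ℝ) ≤ r - x)
        simpa using this
      nlinarith
    have hfr : f r = 0 := by
      simp [hf, Real.zero_rpow (by linarith : γ ≠ 0)]
    have := hanti (Set.mem_Icc.2 ⟨hρ, hcase⟩) (Set.mem_Icc.2 ⟨hr.le, le_rfl⟩) hcase
    rw [hfr] at this
    simp only [hf] at this
    linarith

/-- γ-power coercivity of the relative pressure potential for `γ > 2`:
for `a > 0`, `γ > 2` and `0 < ρmin ≤ ρmax` there is `C > 0`, depending only on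
`a, γ, ρmin, ρmax`, such that `|ρ - r|^γ ≤ C · E_P(ρ|r)` whenever `0 ≤ ρ ≤ ρmax` and
`ρmin ≤ r ≤ ρmax`. -/
theorem abs_rpow_le_relative_pressure_potential
    (a γ ρmin ρmax : ℝ) (ha : 0 < a) (hγ : 2 < γ)
    (h0 : 0 < ρmin) (hle : ρmin ≤ ρmax) :
    ∃ C : ℝ, 0 < C ∧ ∀ ρ r : ℝ, 0 ≤ ρ → ρ ≤ ρmax → ρmin ≤ r → r ≤ ρmax →
      |ρ - r| ^ γ ≤ C * EP a γ ρ r := by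
  refine ⟨(γ - 1) / a, div_pos (by linarith) ha, ?_⟩
  intro ρ r hρ0 _ hr1 _
  have hr : 0 < r := lt_of_lt_of_le h0 hr1
  have hkey := key_pointwise (γ := γ) (r := r) (ρ := ρ) hγ.le hr hρ0
  have hC : (γ - 1) / a * EP a γ ρ r = ρ ^ γ - γ * r ^ (γ - 1) * (ρ - r) - r ^ γ := by
    unfold EP Ppot dPpot
    have h1 : γ - 1 ≠ 0 := by linarith
    field_simp
  rw [hC]
  exact hkey
end

section
/- Let d ≥ 1 be a natural number and let a > 0, γ > 1, 0 < ρ̲ ≤ ρ̄ and ū > 0 be real numbers. Then there exists a constant C > 0, depending only on a, γ, ρ̲, ρ̄, ū, such that for every ρ with 0 ≤ ρ ≤ ρ̄, every r with ρ̲ ≤ r ≤ ρ̄, and every pair of vectors u, U ∈ ℝ^d with ‖U‖ ≤ ū, one has ‖ρu − rU‖² ≤ C ( ρ ‖u − U‖² + E_P(ρ|r) ), where E_P(ρ|r) = P(ρ) − P'(r)(ρ − r) − P(r) and P(ρ) = a ρ^γ/(γ−1). -/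
open Real Set

/-- Derivative of `y ↦ y^γ - γ r^(γ-1) y - (M/2)(y-r)^2` away from `0`. -/
lemma phi_hasDerivAt (γ r M : ℝ) {x : ℝ} (hx : x ≠ 0) :
    HasDerivAt (fun y : ℝ => y ^ γ - γ * r ^ (γ - 1) * y - M / 2 * (y - r) ^ 2)
      (γ * x ^ (γ - 1) - γ * r ^ (γ - 1) - M * (x - r)) x := by
  have h1 := Real.hasDerivAt_rpow_const (p := γ) (Or.inl hx)
  have h2 : HasDerivAt (fun y : ℝ => γ * r ^ (γ - 1) * y) (γ * r ^ (γ - 1)) x := by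
    simpa using (hasDerivAt_id x).const_mul (γ * r ^ (γ - 1))
  have h3 : HasDerivAt (fun y : ℝ => M / 2 * (y - r) ^ 2) (M / 2 * (2 * (x - r) ^ 1 * 1)) x :=
    (((hasDerivAt_id x).sub_const r).pow 2).const_mul (M / 2)
  exact ((h1.sub h2).sub h3).congr_deriv (by ring)

/-- Derivative of `y ↦ y^(γ-1) - c y` away from `0`. -/
lemma q_hasDerivAt (γ c : ℝ) {x : ℝ} (hx : x ≠ 0) :
    HasDerivAt (fun y : ℝ => y ^ (γ - 1) - c * y) ((γ - 1) * x ^ (γ - 2) - c) x := by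
  have h1 := Real.hasDerivAt_rpow_const (p := γ - 1) (Or.inl hx)
  have h2 : HasDerivAt (fun y : ℝ => c * y) c x := by
    simpa using (hasDerivAt_id x).const_mul c
  have e : γ - 1 - 1 = γ - 2 := by ring
  rw [e] at h1
  exact h1.sub h2

/-- Derivative of `y ↦ y^γ - γ r^(γ-1) y` away from `0`. -/
lemma f_hasDerivAt (γ r : ℝ) {x : ℝ} (hx : x ≠ 0) :
    HasDerivAt (fun y : ℝ => y ^ γ - γ * r ^ (γ - 1) * y)
      (γ * x ^ (γ - 1) - γ * r ^ (γ - 1)) x := by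
  have h1 := Real.hasDerivAt_rpow_const (p := γ) (Or.inl hx)
  have h2 : HasDerivAt (fun y : ℝ => γ * r ^ (γ - 1) * y) (γ * r ^ (γ - 1)) x := by
    simpa using (hasDerivAt_id x).const_mul (γ * r ^ (γ - 1))
  exact h1.sub h2

/-- Core quantitative convexity gap on `[lo, hi]` with `lo > 0`. -/
lemma gap_core (γ lo hi : ℝ) (hγ : 1 < γ) (hlo : 0 < lo) (hlh : lo ≤ hi) :
    ∀ x r : ℝ, x ∈ Set.Icc lo hi → r ∈ Set.Icc lo hi →
      γ * (γ - 1) * min (lo ^ (γ - 2)) (hi ^ (γ - 2)) / 2 * (x - r) ^ 2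
        ≤ x ^ γ - r ^ γ - γ * r ^ (γ - 1) * (x - r) := by
  set mm := min (lo ^ (γ - 2)) (hi ^ (γ - 2)) with hmmdef
  have hγ1 : (0:ℝ) < γ - 1 := by linarith
  have hmm0 : 0 < mm :=
    lt_min (Real.rpow_pos_of_pos hlo _) (Real.rpow_pos_of_pos (hlo.trans_le hlh) _)
  have hmmle : ∀ x : ℝ, x ∈ Set.Icc lo hi → mm ≤ x ^ (γ - 2) := by
    intro x hx
    rcases le_or_gt 2 γ with h2 | h2
    · exact le_trans (min_le_left _ _) (Real.rpow_le_rpow hlo.le hx.1 (by linarith))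
    · exact le_trans (min_le_right _ _)
        (Real.rpow_le_rpow_of_nonpos (hlo.trans_le hx.1) hx.2 (by linarith))
  have hq : MonotoneOn (fun y : ℝ => y ^ (γ - 1) - (γ - 1) * mm * y) (Set.Icc lo hi) := by
    apply monotoneOn_of_deriv_nonneg (convex_Icc lo hi)
    · intro y hy
      exact ((q_hasDerivAt γ ((γ - 1) * mm)
        (ne_of_gt (hlo.trans_le hy.1))).continuousAt).continuousWithinAt
    · intro y hy
      rw [interior_Icc] at hy
      exact ((q_hasDerivAt γ ((γ - 1) * mm)
        (ne_of_gt (hlo.trans hy.1))).differentiableAt).differentiableWithinAt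
    · intro y hy
      rw [interior_Icc] at hy
      rw [(q_hasDerivAt γ ((γ - 1) * mm) (ne_of_gt (hlo.trans hy.1))).deriv]
      have := hmmle y ⟨hy.1.le, hy.2.le⟩
      nlinarith
  intro x r hx hr
  have hr0 : 0 < r := hlo.trans_le hr.1
  set M := γ * (γ - 1) * mm with hMdef
  have hM0 : 0 < M := by positivity
  set φ : ℝ → ℝ := fun y => y ^ γ - γ * r ^ (γ - 1) * y - M / 2 * (y - r) ^ 2 with hφdef
  have hφcont : ∀ y ∈ Set.Icc lo hi, ContinuousWithinAt φ (Set.Icc lo hi) y := by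
    intro y hy
    exact ((phi_hasDerivAt γ r M (ne_of_gt (hlo.trans_le hy.1))).continuousAt).continuousWithinAt
  have key : φ r ≤ φ x := by
    rcases le_total r x with hrx | hrx
    · have hmono : MonotoneOn φ (Set.Icc r hi) := by
        apply monotoneOn_of_deriv_nonneg (convex_Icc r hi)
        · intro y hy
          exact (hφcont y ⟨hr.1.trans hy.1, hy.2⟩).mono (Icc_subset_Icc hr.1 le_rfl)
        · intro y hy
          rw [interior_Icc] at hy
          exact ((phi_hasDerivAt γ r M
            (ne_of_gt (hr0.trans hy.1))).differentiableAt).differentiableWithinAt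
        · intro y hy
          rw [interior_Icc] at hy
          rw [(phi_hasDerivAt γ r M (ne_of_gt (hr0.trans hy.1))).deriv]
          have hqle := hq hr ⟨hr.1.trans hy.1.le, hy.2.le⟩ hy.1.le
          simp only at hqle
          rw [hMdef]
          nlinarith [mul_le_mul_of_nonneg_left hqle (show (0:ℝ) ≤ γ by linarith)]
      exact hmono ⟨le_rfl, hr.2⟩ ⟨hrx, hx.2⟩ hrx
    · have hanti : AntitoneOn φ (Set.Icc lo r) := by
        apply antitoneOn_of_deriv_nonpos (convex_Icc lo r)
        · intro y hy
          exact (hφcont y ⟨hy.1, hy.2.trans hr.2⟩).mono (Icc_subset_Icc le_rfl hr.2)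
        · intro y hy
          rw [interior_Icc] at hy
          exact ((phi_hasDerivAt γ r M
            (ne_of_gt (hlo.trans hy.1))).differentiableAt).differentiableWithinAt
        · intro y hy
          rw [interior_Icc] at hy
          rw [(phi_hasDerivAt γ r M (ne_of_gt (hlo.trans hy.1))).deriv]
          have hqle := hq ⟨hy.1.le.trans' le_rfl, (hy.2.le.trans hr.2)⟩ hr hy.2.le
          simp only at hqle
          rw [hMdef]
          nlinarith [mul_le_mul_of_nonneg_left hqle (show (0:ℝ) ≤ γ by linarith)]
      exact hanti ⟨hx.1, hrx⟩ ⟨hr.1, le_rfl⟩ hrx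
  have hφr : φ r = r ^ γ - γ * r ^ (γ - 1) * r := by simp [hφdef]
  have hφx : φ x = x ^ γ - γ * r ^ (γ - 1) * x - M / 2 * (x - r) ^ 2 := rfl
  rw [hφr, hφx] at key
  nlinarith [key]

/-- Full-range quantitative convexity gap, including `ρ` near `0`. -/
lemma gap_all (γ ρmin ρmax : ℝ) (hγ : 1 < γ) (h0 : 0 < ρmin) (hle : ρmin ≤ ρmax) :
    ∀ ρ r : ℝ, 0 ≤ ρ → ρ ≤ ρmax → ρmin ≤ r → r ≤ ρmax →
      γ * (γ - 1) * min ((ρmin / 2) ^ (γ - 2)) (ρmax ^ (γ - 2)) / 8 * (ρ - r) ^ 2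
        ≤ ρ ^ γ - r ^ γ - γ * r ^ (γ - 1) * (ρ - r) := by
  intro ρ r hρ0 hρmax hr1 hr2
  have hlo : 0 < ρmin / 2 := by linarith
  have hlh : ρmin / 2 ≤ ρmax := by linarith
  have hγ1 : (0:ℝ) < γ - 1 := by linarith
  set mm := min ((ρmin / 2) ^ (γ - 2)) (ρmax ^ (γ - 2)) with hmm
  have hmm0 : 0 < mm :=
    lt_min (Real.rpow_pos_of_pos hlo _) (Real.rpow_pos_of_pos (by linarith) _)
  have hM0 : 0 < γ * (γ - 1) * mm := by positivity
  have hkey := gap_core γ (ρmin / 2) ρmax hγ hlo hlh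
  rw [← hmm] at hkey
  rcases le_or_gt (ρmin / 2) ρ with h | h
  · have := hkey ρ r ⟨h, hρmax⟩ ⟨by linarith, hr2⟩
    nlinarith [mul_nonneg hM0.le (sq_nonneg (ρ - r))]
  · have hr0 : 0 < r := by linarith
    have hanti : AntitoneOn (fun y : ℝ => y ^ γ - γ * r ^ (γ - 1) * y) (Set.Icc 0 r) := by
      apply antitoneOn_of_deriv_nonpos (convex_Icc 0 r)
      · apply ContinuousOn.sub
        · exact (Real.continuous_rpow_const (by linarith)).continuousOn
        · exact (Continuous.continuousOn (by fun_prop))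
      · intro y hy
        rw [interior_Icc] at hy
        exact ((f_hasDerivAt γ r (ne_of_gt hy.1)).differentiableAt).differentiableWithinAt
      · intro y hy
        rw [interior_Icc] at hy
        rw [(f_hasDerivAt γ r (ne_of_gt hy.1)).deriv]
        have hyr : y ^ (γ - 1) ≤ r ^ (γ - 1) :=
          Real.rpow_le_rpow hy.1.le hy.2.le (by linarith)
        nlinarith [mul_le_mul_of_nonneg_left hyr (show (0:ℝ) ≤ γ by linarith)]
    have h1 := hanti (show ρ ∈ Set.Icc 0 r from ⟨hρ0, by linarith⟩)
      (show ρmin / 2 ∈ Set.Icc 0 r from ⟨hlo.le, by linarith⟩) h.le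
    simp only at h1
    have h2 := hkey (ρmin / 2) r ⟨le_rfl, hlh⟩ ⟨by linarith, hr2⟩
    have hsq : (ρ - r) ^ 2 ≤ 4 * (ρmin / 2 - r) ^ 2 := by
      nlinarith [mul_nonneg (show (0:ℝ) ≤ r - ρmin + ρ by linarith)
        (show (0:ℝ) ≤ 3 * r - ρmin - ρ by linarith)]
    nlinarith [h1, h2, mul_nonneg hM0.le (sub_nonneg.2 hsq)]

/-- `EP` in explicit form. -/
lemma EP_eq (a γ ρ r : ℝ) (hγ : 1 < γ) :
    EP a γ ρ r = a / (γ - 1) * (ρ ^ γ - r ^ γ - γ * r ^ (γ - 1) * (ρ - r)) := by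
  have h : γ - 1 ≠ 0 := sub_ne_zero.2 (ne_of_gt hγ)
  unfold EP Ppot dPpot
  field_simp
  ring

set_option maxHeartbeats 1000000 in
/-- Momentum error bound by the relative energy integrand: for `d ≥ 1`, `a > 0`, `γ > 1`,
`0 < ρmin ≤ ρmax` and `ub > 0` there exists `C > 0`, depending only on
`a, γ, ρmin, ρmax, ub`, such that for all `0 ≤ ρ ≤ ρmax`, `ρmin ≤ r ≤ ρmax` and vectors
`u, U ∈ ℝ^d` with `‖U‖ ≤ ub`, one has `‖ρu - rU‖² ≤ C (ρ ‖u - U‖² + E_P(ρ|r))`. -/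
theorem momentum_sq_le_relative_energy
    (d : ℕ) (hd : 1 ≤ d) (a γ ρmin ρmax ub : ℝ) (ha : 0 < a) (hγ : 1 < γ)
    (h0 : 0 < ρmin) (hle : ρmin ≤ ρmax) (hub : 0 < ub) :
    ∃ C : ℝ, 0 < C ∧ ∀ (ρ r : ℝ) (u U : EuclideanSpace ℝ (Fin d)),
      0 ≤ ρ → ρ ≤ ρmax → ρmin ≤ r → r ≤ ρmax → ‖U‖ ≤ ub →
      ‖ρ • u - r • U‖ ^ 2 ≤ C * (ρ * ‖u - U‖ ^ 2 + EP a γ ρ r) := by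
  have hγ1 : (0:ℝ) < γ - 1 := by linarith
  have hρmax0 : 0 < ρmax := lt_of_lt_of_le h0 hle
  set mm := min ((ρmin / 2) ^ (γ - 2)) (ρmax ^ (γ - 2)) with hmm
  have hmm0 : 0 < mm :=
    lt_min (Real.rpow_pos_of_pos (by linarith) _) (Real.rpow_pos_of_pos hρmax0 _)
  set κ := a / (γ - 1) * (γ * (γ - 1) * mm / 8) with hκdef
  have hκ : 0 < κ := by
    apply mul_pos (div_pos ha hγ1)
    have : 0 < γ * (γ - 1) * mm := mul_pos (mul_pos (by linarith) hγ1) hmm0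
    linarith
  have hκne : κ ≠ 0 := ne_of_gt hκ
  have hc2 : (0:ℝ) < 2 * ub ^ 2 / κ := div_pos (by positivity) hκ
  refine ⟨2 * ρmax + 2 * ub ^ 2 / κ, by linarith, ?_⟩
  intro ρ r u U hρ0 hρmax hr1 hr2 hU
  have hgap := gap_all γ ρmin ρmax hγ h0 hle ρ r hρ0 hρmax hr1 hr2
  rw [← hmm] at hgap
  have hEP : κ * (ρ - r) ^ 2 ≤ EP a γ ρ r := by
    rw [EP_eq a γ ρ r hγ]
    calc κ * (ρ - r) ^ 2
        = a / (γ - 1) * (γ * (γ - 1) * mm / 8 * (ρ - r) ^ 2) := by rw [hκdef]; ring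
      _ ≤ a / (γ - 1) * (ρ ^ γ - r ^ γ - γ * r ^ (γ - 1) * (ρ - r)) :=
          mul_le_mul_of_nonneg_left hgap (le_of_lt (div_pos ha hγ1))
  have hEP0 : 0 ≤ EP a γ ρ r := le_trans (mul_nonneg hκ.le (sq_nonneg _)) hEP
  have hdecomp : ρ • u - r • U = ρ • (u - U) + (ρ - r) • U := by module
  have hA : ‖ρ • u - r • U‖ ≤ ρ * ‖u - U‖ + |ρ - r| * ‖U‖ := by
    rw [hdecomp]
    refine (norm_add_le _ _).trans ?_
    rw [norm_smul, norm_smul, Real.norm_eq_abs, Real.norm_eq_abs, abs_of_nonneg hρ0]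
  have hsq : ‖ρ • u - r • U‖ ^ 2 ≤ (ρ * ‖u - U‖ + |ρ - r| * ‖U‖) ^ 2 :=
    pow_le_pow_left₀ (norm_nonneg _) hA 2
  have hU0 : (0:ℝ) ≤ ‖U‖ := norm_nonneg _
  have hX0 : (0:ℝ) ≤ ‖u - U‖ := norm_nonneg _
  have h2 : ‖U‖ ^ 2 ≤ ub ^ 2 := by nlinarith
  have h3 : ρ ^ 2 * ‖u - U‖ ^ 2 ≤ ρmax * (ρ * ‖u - U‖ ^ 2) := by
    nlinarith [mul_nonneg (mul_nonneg (sub_nonneg.2 hρmax) hρ0) (sq_nonneg ‖u - U‖)]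
  have hB : (|ρ - r| * ‖U‖) ^ 2 ≤ ub ^ 2 * (ρ - r) ^ 2 := by
    rw [mul_pow, sq_abs]
    nlinarith [mul_le_mul_of_nonneg_left h2 (sq_nonneg (ρ - r))]
  have h1 : (ρ * ‖u - U‖ + |ρ - r| * ‖U‖) ^ 2
      ≤ 2 * ρmax * (ρ * ‖u - U‖ ^ 2) + 2 * ub ^ 2 * (ρ - r) ^ 2 := by
    nlinarith [sq_nonneg (ρ * ‖u - U‖ - |ρ - r| * ‖U‖), hB, h3]
  have h4 : 2 * ub ^ 2 * (ρ - r) ^ 2 ≤ 2 * ub ^ 2 / κ * EP a γ ρ r := by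
    calc 2 * ub ^ 2 * (ρ - r) ^ 2 = 2 * ub ^ 2 / κ * (κ * (ρ - r) ^ 2) := by
          field_simp
        _ ≤ 2 * ub ^ 2 / κ * EP a γ ρ r :=
          mul_le_mul_of_nonneg_left hEP (by positivity)
  have hXE : 0 ≤ ρ * ‖u - U‖ ^ 2 := by positivity
  calc ‖ρ • u - r • U‖ ^ 2
      ≤ 2 * ρmax * (ρ * ‖u - U‖ ^ 2) + 2 * ub ^ 2 * (ρ - r) ^ 2 := le_trans hsq h1
    _ ≤ 2 * ρmax * (ρ * ‖u - U‖ ^ 2) + 2 * ub ^ 2 / κ * EP a γ ρ r := by linarith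
    _ ≤ (2 * ρmax + 2 * ub ^ 2 / κ) * (ρ * ‖u - U‖ ^ 2 + EP a γ ρ r) := by
        nlinarith [mul_nonneg hc2.le hXE, mul_nonneg (by linarith : (0:ℝ) ≤ 2 * ρmax) hEP0]
end
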